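/- Let α ∈ ℝ and let u, w : ℝ → ℝ be differentiable functions satisfying u'(s) = 2u(s)w(s) + 2α and w'(s) = -(w(s)² - 2u(s) - s) for all s ∈ ℝ, with Hamiltonian H(s) = -u(s)² + (w(s)² - s)·u(s) + 2α·w(s). Assume that as s → +∞: w(s) + √s + (α + 1/4)/s = O(s^{-5/2}), H(s) + 2α√s + α²/s = O(s^{-5/2}), u(s)w'(s) + H(s) + 2α√s + α(2α+1)/(2s) = O(s^{-5/2}), and u(s)w(s) + 2sH(s) + 4α·s^{3/2} → -α - 2α². Fix c > 0 large enough that these bounds hold on [c, ∞), and define Ĩ₁(s) := ∫_{c}^{+∞} ( w(τ) + √τ + (α + 1/4)/τ ) dτ + ∫_{s}^{c} w dτ + (2/3)c^{3/2} + (α + 1/4)ln c, I₂(s) := ∫_{c}^{+∞} ( H(τ) + 2α√τ + α²/τ ) dτ + ∫_{s}^{c} H dτ + (4/3)α c^{3/2} + α² ln c, and I₃(s) := ∫_{c}^{+∞} ( u(τ)w'(τ) + H(τ) + 2α√τ + α(2α+1)/(2τ) ) dτ + ∫_{s}^{c} ( u w' + H ) dτ + (4/3)α c^{3/2} + α(α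 + 1/2)ln c. Then all three integrals converge and, for every s ∈ ℝ, I₂(s) = -(1/3)·( u(s)w(s) + 2s·H(s) + 2α² + α ) + 2α·Ĩ₁(s) - I₃(s). -/

import Mathlib

open MeasureTheory Filter




private lemma aux_integrable {f : ℝ → ℝ} {c C : ℝ} (hc : 0 < c)
    (hfc : ContinuousOn f (Set.Ici c))
    (hb : ∀ τ, c ≤ τ → |f τ| ≤ C * τ ^ (-(5 : ℝ) / 2)) :
    IntegrableOn f (Set.Ici c) := by
  have hint : IntegrableOn (fun τ : ℝ => C * τ ^ (-(5 : ℝ) / 2)) (Set.Ici c) := by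
    rw [integrableOn_Ici_iff_integrableOn_Ioi]
    exact (integrableOn_Ioi_rpow_of_lt (by norm_num) hc).const_mul C
  apply Integrable.mono' hint (hfc.aestronglyMeasurable measurableSet_Ici)
  filter_upwards [ae_restrict_mem measurableSet_Ici] with τ hτ
  simpa [Real.norm_eq_abs] using hb τ hτ


/-- The regularized integral Ĩ₁(s; c) of the rescaled Painlevé II transcendent w. -/
noncomputable def I1tilde (α : ℝ) (w : ℝ → ℝ) (s c : ℝ) : ℝ :=
  (∫ τ in Set.Ici c, (w τ + Real.sqrt τ + (α + 1 / 4) / τ)) +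
    (∫ τ in s..c, w τ) + 2 / 3 * c ^ ((3 : ℝ) / 2) + (α + 1 / 4) * Real.log c

/-- The regularized integral I₂(s; c) of the Hamiltonian H. -/
noncomputable def I2reg (α : ℝ) (H : ℝ → ℝ) (s c : ℝ) : ℝ :=
  (∫ τ in Set.Ici c, (H τ + 2 * α * Real.sqrt τ + α ^ 2 / τ)) +
    (∫ τ in s..c, H τ) + 4 / 3 * α * c ^ ((3 : ℝ) / 2) + α ^ 2 * Real.log c

/-- The auxiliary regularized integral I₃(s; c) of u·w' + H. -/
noncomputable def I3reg (α : ℝ) (u w H : ℝ → ℝ) (s c : ℝ) : ℝ :=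
  (∫ τ in Set.Ici c,
      (u τ * deriv w τ + H τ + 2 * α * Real.sqrt τ + α * (2 * α + 1) / (2 * τ))) +
    (∫ τ in s..c, (u τ * deriv w τ + H τ)) +
    4 / 3 * α * c ^ ((3 : ℝ) / 2) + α * (α + 1 / 2) * Real.log c

/-- Identity I₂(s) = -(1/3)(uw + 2sH + 2α² + α) + 2α·Ĩ₁(s) - I₃(s) for the regularized
integrals associated with the tronquée solutions of Painlevé II. -/
theorem stmt_15 (α : ℝ) (u w H : ℝ → ℝ)
    (hu : ∀ s : ℝ, HasDerivAt u (2 * u s * w s + 2 * α) s)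
    (hw : ∀ s : ℝ, HasDerivAt w (-(w s ^ 2 - 2 * u s - s)) s)
    (hH : ∀ s : ℝ, H s = -(u s) ^ 2 + (w s ^ 2 - s) * u s + 2 * α * w s)
    (c : ℝ) (hc : 0 < c) (C : ℝ) (hC : 0 < C)
    (hw_asym : ∀ τ : ℝ, c ≤ τ →
      |w τ + Real.sqrt τ + (α + 1 / 4) / τ| ≤ C * τ ^ (-(5 : ℝ) / 2))
    (hH_asym : ∀ τ : ℝ, c ≤ τ →
      |H τ + 2 * α * Real.sqrt τ + α ^ 2 / τ| ≤ C * τ ^ (-(5 : ℝ) / 2))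
    (huw_asym : ∀ τ : ℝ, c ≤ τ →
      |u τ * deriv w τ + H τ + 2 * α * Real.sqrt τ + α * (2 * α + 1) / (2 * τ)| ≤
        C * τ ^ (-(5 : ℝ) / 2))
    (hlim : Tendsto (fun s => u s * w s + 2 * s * H s + 4 * α * s ^ ((3 : ℝ) / 2)) atTop
      (nhds (-α - 2 * α ^ 2))) :
    IntegrableOn (fun τ => w τ + Real.sqrt τ + (α + 1 / 4) / τ) (Set.Ici c) ∧
    IntegrableOn (fun τ => H τ + 2 * α * Real.sqrt τ + α ^ 2 / τ) (Set.Ici c) ∧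
    IntegrableOn (fun τ =>
      u τ * deriv w τ + H τ + 2 * α * Real.sqrt τ + α * (2 * α + 1) / (2 * τ)) (Set.Ici c) ∧
    ∀ s : ℝ, I2reg α H s c = -(1 / 3) * (u s * w s + 2 * s * H s + 2 * α ^ 2 + α) +
      2 * α * I1tilde α w s c - I3reg α u w H s c := by
  -- basic continuity
  have hdu : Differentiable ℝ u := fun s => (hu s).differentiableAt
  have hdw : Differentiable ℝ w := fun s => (hw s).differentiableAt
  have hcu : Continuous u := hdu.continuous
  have hcw : Continuous w := hdw.continuous
  have hDW : deriv w = fun s => -(w s ^ 2 - 2 * u s - s) := funext fun s => (hw s).deriv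
  have hcDW : Continuous (deriv w) := by
    rw [hDW]; continuity
  have hHeq : H = fun t => -(u t) ^ 2 + (w t ^ 2 - t) * u t + 2 * α * w t := funext hH
  have hcH : Continuous H := by rw [hHeq]; continuity
  -- derivative of H along the flow
  have hH' : ∀ s : ℝ, HasDerivAt H (-(u s)) s := by
    intro s
    rw [hHeq]
    have hd := (((hu s).pow 2).neg.add
        ((((hw s).pow 2).sub (hasDerivAt_id s)).mul (hu s))).add ((hw s).const_mul (2 * α))
    refine hd.congr_deriv (Eq.symm ?_)
    simp only [id, Pi.sub_apply, Pi.pow_apply]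
    ring
  -- derivative of F = u w + 2 s H
  have hF : ∀ s : ℝ, HasDerivAt (fun t => u t * w t + 2 * t * H t)
      (3 * (u s * deriv w s) + 6 * H s - 6 * α * w s) s := by
    intro s
    have hd := ((hu s).mul (hw s)).add (((hasDerivAt_id s).const_mul 2).mul (hH' s))
    refine hd.congr_deriv (Eq.symm ?_)
    rw [hDW]
    simp only [id]
    linear_combination (4 : ℝ) * hH s
  -- integrability of the three tails
  have hne : ∀ τ : ℝ, τ ∈ Set.Ici c → τ ≠ 0 := fun τ hτ => (lt_of_lt_of_le hc hτ).ne'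
  have hI1 : IntegrableOn (fun τ => w τ + Real.sqrt τ + (α + 1 / 4) / τ) (Set.Ici c) := by
    refine aux_integrable hc ?_ hw_asym
    exact ((hcw.continuousOn.add Real.continuous_sqrt.continuousOn).add
      (continuousOn_const.div continuousOn_id hne))
  have hI2 : IntegrableOn (fun τ => H τ + 2 * α * Real.sqrt τ + α ^ 2 / τ) (Set.Ici c) := by
    refine aux_integrable hc ?_ hH_asym
    exact ((hcH.continuousOn.add (continuousOn_const.mul Real.continuous_sqrt.continuousOn)).add
      (continuousOn_const.div continuousOn_id hne))
  have hI3 : IntegrableOn (fun τ =>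
      u τ * deriv w τ + H τ + 2 * α * Real.sqrt τ + α * (2 * α + 1) / (2 * τ)) (Set.Ici c) := by
    refine aux_integrable hc ?_ huw_asym
    refine (((((hcu.mul hcDW).add hcH).continuousOn).add
      (continuousOn_const.mul Real.continuous_sqrt.continuousOn)).add
      (continuousOn_const.div (continuousOn_const.mul continuousOn_id) ?_))
    intro τ hτ
    have := hne τ hτ
    positivity
  refine ⟨hI1, hI2, hI3, ?_⟩
  -- the combined tail integral
  set T1 : ℝ → ℝ := fun τ => w τ + Real.sqrt τ + (α + 1 / 4) / τ with hT1
  set T2 : ℝ → ℝ := fun τ => H τ + 2 * α * Real.sqrt τ + α ^ 2 / τ with hT2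
  set T3 : ℝ → ℝ := fun τ =>
    u τ * deriv w τ + H τ + 2 * α * Real.sqrt τ + α * (2 * α + 1) / (2 * τ) with hT3
  set G : ℝ → ℝ := fun τ =>
    1 / 3 * (u τ * w τ + 2 * τ * H τ) + 4 / 3 * α * τ ^ ((3 : ℝ) / 2) with hG
  have hGd : ∀ τ : ℝ, 0 < τ → HasDerivAt G (T2 τ - 2 * α * T1 τ + T3 τ) τ := by
    intro τ hτ
    have hd := ((hF τ).const_mul (1 / 3 : ℝ)).add
      ((Real.hasDerivAt_rpow_const (p := (3 : ℝ) / 2) (Or.inl hτ.ne')).const_mul (4 / 3 * α))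
    refine hd.congr_deriv (Eq.symm ?_)
    have h12 : (3 : ℝ) / 2 - 1 = 1 / 2 := by norm_num
    simp only [hT1, hT2, hT3, h12, Real.sqrt_eq_rpow]
    field_simp
    ring
  have hGcont : ∀ τ : ℝ, 0 < τ → ContinuousAt G τ := fun τ hτ => (hGd τ hτ).continuousAt
  have hGlim : Tendsto G atTop (nhds (1 / 3 * (-α - 2 * α ^ 2))) := by
    have h1 : Tendsto (fun s : ℝ => 1 / 3 *
        (u s * w s + 2 * s * H s + 4 * α * s ^ ((3 : ℝ) / 2))) atTop
        (nhds (1 / 3 * (-α - 2 * α ^ 2))) := hlim.const_mul _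
    refine h1.congr (fun s => ?_)
    rw [hG]; ring
  have hIcomb : IntegrableOn (fun τ => T2 τ - 2 * α * T1 τ + T3 τ) (Set.Ioi c) := by
    rw [← integrableOn_Ici_iff_integrableOn_Ioi]
    exact (hI2.sub (hI1.const_mul (2 * α))).add hI3
  have hE1 : ∫ τ in Set.Ioi c, (T2 τ - 2 * α * T1 τ + T3 τ) =
      1 / 3 * (-α - 2 * α ^ 2) - G c := by
    exact integral_Ioi_of_hasDerivAt_of_tendsto
      ((hGcont c hc).continuousWithinAt)
      (fun x hx => hGd x (lt_trans hc hx)) hIcomb hGlim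
  have hsplit : (∫ τ in Set.Ici c, T2 τ) - 2 * α * (∫ τ in Set.Ici c, T1 τ) +
      (∫ τ in Set.Ici c, T3 τ) = 1 / 3 * (-α - 2 * α ^ 2) - G c := by
    have hIoi1 : IntegrableOn T1 (Set.Ioi c) := (integrableOn_Ici_iff_integrableOn_Ioi).1 hI1
    have hIoi2 : IntegrableOn T2 (Set.Ioi c) := (integrableOn_Ici_iff_integrableOn_Ioi).1 hI2
    have hIoi3 : IntegrableOn T3 (Set.Ioi c) := (integrableOn_Ici_iff_integrableOn_Ioi).1 hI3
    have hlin : ∫ τ in Set.Ioi c, (T2 τ - 2 * α * T1 τ + T3 τ) =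
        (∫ τ in Set.Ioi c, T2 τ) - 2 * α * (∫ τ in Set.Ioi c, T1 τ) +
        (∫ τ in Set.Ioi c, T3 τ) := by
      have h1c : IntegrableOn (fun τ => 2 * α * T1 τ) (Set.Ioi c) := hIoi1.const_mul (2 * α)
      have h12 : IntegrableOn (fun τ => T2 τ - 2 * α * T1 τ) (Set.Ioi c) := hIoi2.sub h1c
      rw [integral_add h12 hIoi3, integral_sub hIoi2 h1c, integral_const_mul]
    rw [integral_Ici_eq_integral_Ioi, integral_Ici_eq_integral_Ioi,
      integral_Ici_eq_integral_Ioi, ← hlin, hE1]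
  -- interval integrals via FTC
  intro s
  have hFTC : ∫ τ in s..c, (3 * (u τ * deriv w τ) + 6 * H τ - 6 * α * w τ) =
      (u c * w c + 2 * c * H c) - (u s * w s + 2 * s * H s) := by
    refine intervalIntegral.integral_eq_sub_of_hasDerivAt (fun t _ => hF t) ?_
    exact (((continuous_const.mul (hcu.mul hcDW)).add
      (continuous_const.mul hcH)).sub (continuous_const.mul hcw)).intervalIntegrable s c
  have hiw : IntervalIntegrable w volume s c := hcw.intervalIntegrable s c
  have hiH : IntervalIntegrable H volume s c := hcH.intervalIntegrable s c
  have hiuw : IntervalIntegrable (fun τ => u τ * deriv w τ + H τ) volume s c :=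
    ((hcu.mul hcDW).add hcH).intervalIntegrable s c
  have hE2 : (∫ τ in s..c, H τ) - 2 * α * (∫ τ in s..c, w τ) +
      (∫ τ in s..c, (u τ * deriv w τ + H τ)) =
      1 / 3 * ((u c * w c + 2 * c * H c) - (u s * w s + 2 * s * H s)) := by
    rw [← hFTC, ← intervalIntegral.integral_const_mul,
      ← intervalIntegral.integral_sub hiH (hiw.const_mul (2 * α)),
      ← intervalIntegral.integral_add (hiH.sub (hiw.const_mul (2 * α))) hiuw,
      ← intervalIntegral.integral_const_mul]
    apply intervalIntegral.integral_congr
    intro t _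
    ring
  have hGc : G c = 1 / 3 * (u c * w c + 2 * c * H c) + 4 / 3 * α * c ^ ((3 : ℝ) / 2) := by
    rw [hG]
  unfold I1tilde I2reg I3reg
  rw [← hT1, ← hT2, ← hT3]
  linear_combination hsplit + hE2 - hGc
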